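/- Let u* be the max-margin solution of min ‖u‖² s.t. yⱼ(u·vⱼ) ≥ 1 (linearly separable data, some constraint active). For r > 0 define w₁ = u*/(1+r²), w₂ = r·u*/(1+r²). Then (w₁, w₂) satisfies the KKT conditions of min ‖w₁‖² + ‖w₂‖² s.t. yⱼ((w₁ + r·w₂)·vⱼ) ≥ 1: there exist λⱼ ≥ 0 with w₁ = Σⱼ λⱼ yⱼ vⱼ, w₂ = r·Σⱼ λⱼ yⱼ vⱼ, and λⱼ = 0 whenever yⱼ((w₁+r·w₂)·vⱼ) > 1. -/

import Mathlib

open Matrix BigOperators Finset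

variable {E : Type*} {ι : Type*} [DecidableEq ι]

section Cone
variable [AddCommGroup E] [Module ℝ E]

/-- The cone generated by `a i`, `i ∈ s`. -/
def coneSet (a : ι → E) (s : Finset ι) : Set E :=
  {x | ∃ μ : ι → ℝ, (∀ i, 0 ≤ μ i) ∧ x = ∑ i ∈ s, μ i • a i}

lemma coneSet_mono (a : ι → E) {s t : Finset ι} (hst : s ⊆ t) :
    coneSet a s ⊆ coneSet a t := by
  rintro x ⟨μ, hμ, rfl⟩
  refine ⟨fun i => if i ∈ s then μ i else 0,
    fun i => by by_cases h : i ∈ s <;> simp [h, hμ i], ?_⟩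
  rw [← Finset.sum_subset hst (fun i _ hi => by simp [hi])]
  exact Finset.sum_congr rfl fun i hi => by simp [hi]

/-- Conic Carathéodory: every element of a finitely generated cone lies in the
cone over a linearly independent subfamily. -/
lemma caratheodory_cone (a : ι → E) (s : Finset ι) (μ : ι → ℝ) (hμ : ∀ i, 0 ≤ μ i) :
    ∃ t ⊆ s, (LinearIndependent ℝ fun i : t => a i) ∧
      ∃ ν : ι → ℝ, (∀ i, 0 ≤ ν i) ∧ ∑ i ∈ t, ν i • a i = ∑ i ∈ s, μ i • a i := by
  induction s using Finset.strongInduction generalizing μ with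
  | _ s ih =>
    by_cases hLI : LinearIndependent ℝ fun i : s => a i
    · exact ⟨s, Finset.Subset.refl s, hLI, μ, hμ, rfl⟩
    obtain ⟨g, hgsum, i₁, hi₁⟩ := Fintype.not_linearIndependent_iff.mp hLI
    obtain ⟨g', hg'sum, hg'pos⟩ :
        ∃ g' : {x // x ∈ s} → ℝ, (∑ i : {x // x ∈ s}, g' i • a ↑i = 0) ∧ 0 < g' i₁ := by
      rcases hi₁.lt_or_gt with h | h
      · refine ⟨-g, ?_, by simpa using h⟩
        simp only [Pi.neg_apply, neg_smul, Finset.sum_neg_distrib, neg_eq_zero]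
        simpa [Finset.univ_eq_attach] using hgsum
      · exact ⟨g, hgsum, h⟩
    set c : ι → ℝ := fun i => if h : i ∈ s then g' ⟨i, h⟩ else 0 with hc
    have hcsum : ∑ i ∈ s, c i • a i = 0 := by
      rw [← Finset.sum_coe_sort s (fun i => c i • a i), ← hg'sum]
      exact Finset.sum_congr rfl fun i _ => by simp [hc, dif_pos i.2]
    have hj₁ : 0 < c (i₁ : ι) := by simp only [hc, dif_pos i₁.2, Subtype.coe_eta]; exact hg'pos
    set P : Finset ι := s.filter (fun i => 0 < c i) with hP
    have hPne : P.Nonempty := ⟨i₁, Finset.mem_filter.mpr ⟨i₁.2, hj₁⟩⟩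
    obtain ⟨i₀, hi₀P, hi₀min⟩ := P.exists_min_image (fun i => μ i / c i) hPne
    have hi₀s : i₀ ∈ s := (Finset.mem_filter.mp hi₀P).1
    have hci₀ : 0 < c i₀ := (Finset.mem_filter.mp hi₀P).2
    set α : ℝ := μ i₀ / c i₀ with hα
    have hα0 : 0 ≤ α := div_nonneg (hμ i₀) hci₀.le
    set ν : ι → ℝ := fun i => if i ∈ s then μ i - α * c i else 0 with hν
    have hν0 : ∀ i, 0 ≤ ν i := by
      intro i
      simp only [hν]
      split_ifs with hi
      · rcases le_or_gt (c i) 0 with hcle | hcpos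
        · nlinarith [hμ i, mul_nonpos_of_nonneg_of_nonpos hα0 hcle]
        · have h1 := hi₀min i (Finset.mem_filter.mpr ⟨hi, hcpos⟩)
          have h2 : α * c i ≤ μ i := by
            rw [hα, div_mul_eq_mul_div, div_le_iff₀ hci₀]
            rw [hα, div_le_div_iff₀ hci₀ hcpos] at h1
            linarith
          linarith
      · exact le_refl 0
    have hνi₀ : ν i₀ = 0 := by
      simp only [hν, if_pos hi₀s, hα]
      field_simp
      ring
    have hsum : ∑ i ∈ s.erase i₀, ν i • a i = ∑ i ∈ s, μ i • a i := by
      rw [Finset.sum_erase _ (by rw [hνi₀, zero_smul])]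
      have : ∀ i ∈ s, ν i • a i = μ i • a i - α • (c i • a i) := by
        intro i hi
        simp only [hν, if_pos hi]
        rw [sub_smul, smul_smul]
      rw [Finset.sum_congr rfl this, Finset.sum_sub_distrib, ← Finset.smul_sum, hcsum,
        smul_zero, sub_zero]
    obtain ⟨t, hts, hLI', ν', hν', hsum'⟩ :=
      ih (s.erase i₀) (Finset.erase_ssubset hi₀s) ν hν0
    exact ⟨t, hts.trans (Finset.erase_subset _ _), hLI', ν', hν', by rw [hsum', hsum]⟩

end Cone

section Closed
variable [NormedAddCommGroup E] [NormedSpace ℝ E] [FiniteDimensional ℝ E]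

lemma isClosed_coneSet_of_li (a : ι → E) (t : Finset ι)
    (hLI : LinearIndependent ℝ fun i : t => a i) : IsClosed (coneSet a t) := by
  classical
  let L : ({x // x ∈ t} → ℝ) →ₗ[ℝ] E :=
    { toFun := fun ν => ∑ i : {x // x ∈ t}, ν i • a ↑i
      map_add' := fun ν₁ ν₂ => by simp [add_smul, Finset.sum_add_distrib]
      map_smul' := fun c ν => by simp [smul_smul, Finset.smul_sum] }
  have hker : LinearMap.ker L = ⊥ := by
    rw [LinearMap.ker_eq_bot']
    intro ν hν
    funext i
    exact Fintype.linearIndependent_iff.mp hLI ν hν i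
  have hembed := LinearMap.isClosedEmbedding_of_injective hker
  have hQ : IsClosed {ν : {x // x ∈ t} → ℝ | ∀ i, 0 ≤ ν i} := by
    have : {ν : {x // x ∈ t} → ℝ | ∀ i, 0 ≤ ν i} = ⋂ i, {ν | 0 ≤ ν i} := by
      ext ν; simp
    rw [this]
    exact isClosed_iInter fun i => isClosed_le continuous_const (continuous_apply i)
  have himg : coneSet a t = L '' {ν : {x // x ∈ t} → ℝ | ∀ i, 0 ≤ ν i} := by
    ext x
    constructor
    · rintro ⟨μ, hμ, rfl⟩
      refine ⟨fun i => μ ↑i, fun i => hμ _, ?_⟩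
      show ∑ i : {x // x ∈ t}, μ ↑i • a ↑i = ∑ i ∈ t, μ i • a i
      exact Finset.sum_coe_sort t (fun i => μ i • a i)
    · rintro ⟨ν, hν, rfl⟩
      refine ⟨fun i => if h : i ∈ t then ν ⟨i, h⟩ else 0,
        fun i => by by_cases h : i ∈ t <;> simp [h, hν _], ?_⟩
      show ∑ i : {x // x ∈ t}, ν i • a ↑i
          = ∑ i ∈ t, (if h : i ∈ t then ν ⟨i, h⟩ else 0) • a i
      rw [← Finset.sum_coe_sort t (fun i => (if h : i ∈ t then ν ⟨i, h⟩ else 0) • a i)]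
      exact Finset.sum_congr rfl fun i _ => by rw [dif_pos i.2, Subtype.coe_eta]
  rw [himg]
  exact hembed.isClosedMap _ hQ

lemma isClosed_coneSet (a : ι → E) (s : Finset ι) : IsClosed (coneSet a s) := by
  classical
  have hunion : coneSet a s =
      ⋃ t ∈ (s.powerset.filter (fun t => LinearIndependent ℝ fun i : {x // x ∈ t} => a ↑i)),
        coneSet a t := by
    ext x
    simp only [Set.mem_iUnion, Finset.mem_filter, Finset.mem_powerset]
    constructor
    · rintro ⟨μ, hμ, rfl⟩
      obtain ⟨t, hts, hLI, ν, hν, hsum⟩ := caratheodory_cone a s μ hμ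
      exact ⟨t, ⟨hts, hLI⟩, ν, hν, hsum.symm⟩
    · rintro ⟨t, ⟨hts, _⟩, hx⟩
      exact coneSet_mono a hts hx
  rw [hunion]
  exact Set.Finite.isClosed_biUnion (Finset.finite_toSet _)
    (fun t ht => isClosed_coneSet_of_li a t (Finset.mem_filter.mp ht).2)

end Closed

/-- `coneSet` as a `ConvexCone`. -/
def coneCone [AddCommGroup E] [Module ℝ E] (a : ι → E) (s : Finset ι) : ConvexCone ℝ E where
  carrier := coneSet a s
  smul_mem' := by
    rintro c hc x ⟨μ, hμ, rfl⟩
    refine ⟨fun i => c * μ i, fun i => mul_nonneg hc.le (hμ i), ?_⟩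
    rw [Finset.smul_sum]
    exact Finset.sum_congr rfl fun i _ => by simp [smul_smul]
  add_mem' := by
    rintro x ⟨μ, hμ, rfl⟩ z ⟨ν, hν, rfl⟩
    refine ⟨fun i => μ i + ν i, fun i => add_nonneg (hμ i) (hν i), ?_⟩
    rw [← Finset.sum_add_distrib]
    exact Finset.sum_congr rfl fun i _ => by simp [add_smul]

lemma mem_coneCone [AddCommGroup E] [Module ℝ E] (a : ι → E) (s : Finset ι) (x : E) :
    x ∈ coneCone a s ↔ x ∈ coneSet a s := Iff.rfl

open scoped RealInnerProductSpace in
lemma kkt_core {F : Type*} [NormedAddCommGroup F] [InnerProductSpace ℝ F]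
    [FiniteDimensional ℝ F] {m : ℕ} (a : Fin m → F) (u : F)
    (hfeas : ∀ j, 1 ≤ ⟪a j, u⟫)
    (hopt : ∀ w : F, (∀ j, 1 ≤ ⟪a j, w⟫) → ⟪u, u⟫ ≤ ⟪w, w⟫) :
    ∃ μ : Fin m → ℝ, (∀ j, 0 ≤ μ j) ∧ u = ∑ j, μ j • a j ∧
      ∀ j, 1 < ⟪a j, u⟫ → μ j = 0 := by
  classical
  haveI : CompleteSpace F := FiniteDimensional.complete ℝ F
  set s : Finset (Fin m) := Finset.univ.filter (fun j => ⟪a j, u⟫ ≤ 1) with hs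
  by_cases hu : u ∈ coneSet a s
  · obtain ⟨μ, hμ, hrep⟩ := hu
    refine ⟨fun j => if j ∈ s then μ j else 0,
      fun j => by by_cases h : j ∈ s <;> simp [h, hμ j], ?_, ?_⟩
    · rw [hrep, ← Finset.sum_subset (Finset.subset_univ s) (fun i _ hi => by simp [hi])]
      exact Finset.sum_congr rfl fun i hi => by simp [hi]
    · intro j hj
      have hjs : j ∉ s := by simp [hs]; linarith
      simp [hjs]
  · exfalso
    obtain ⟨z, hz1, hz2⟩ :=
      ConvexCone.hyperplane_separation_of_nonempty_of_isClosed_of_notMem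
        (C := ({ carrier := coneSet a s
                 add_mem' := fun hx hz => (coneCone a s).add_mem' hx hz
                 zero_mem' := ⟨fun _ => 0, fun _ => le_refl 0, by simp⟩
                 smul_mem' := fun c x hx => by
                   obtain ⟨μ, hμ, rfl⟩ := hx
                   refine ⟨fun i => (c : ℝ) * μ i, fun i => mul_nonneg c.2 (hμ i), ?_⟩
                   change (c : ℝ) • ∑ i ∈ s, μ i • a i = _
                   rw [Finset.smul_sum]
                   exact Finset.sum_congr rfl fun i _ => by simp [smul_smul]
                 isClosed' := isClosed_coneSet a s } : ProperCone ℝ F)) hu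
    have hzs : ∀ j ∈ s, 0 ≤ ⟪a j, z⟫ := by
      intro j hj
      refine hz1 (a j) ⟨fun i => if i = j then 1 else 0,
        fun i => by by_cases h : i = j <;> simp [h], ?_⟩
      have hterm : ∀ i ∈ s, (fun i => if i = j then (1:ℝ) else 0) i • a i
          = if i = j then a i else 0 := fun i _ => by by_cases h : i = j <;> simp [h]
      rw [Finset.sum_congr rfl hterm, Finset.sum_ite_eq' s j a, if_pos hj]
    set f : ℝ → F := fun ε => u + ε • z with hf
    have hfeas' : ∀ j, ∀ᶠ ε in nhdsWithin 0 (Set.Ioi 0), 1 ≤ ⟪a j, f ε⟫ := by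
      intro j
      by_cases hj : j ∈ s
      · filter_upwards [self_mem_nhdsWithin] with ε hε
        have hexp : ⟪a j, f ε⟫ = ⟪a j, u⟫ + ε * ⟪a j, z⟫ := by
          simp [hf, inner_add_right, real_inner_smul_right]
        rw [hexp]
        have := mul_nonneg (le_of_lt hε) (hzs j hj)
        linarith [hfeas j]
      · have hj1 : 1 < ⟪a j, f 0⟫ := by
          have : ¬ (⟪a j, u⟫ ≤ 1) := by simpa [hs] using hj
          simpa [hf] using not_le.mp this
        have hcont : ContinuousAt (fun ε : ℝ => ⟪a j, f ε⟫) 0 := by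
          apply Continuous.continuousAt
          exact continuous_const.inner (continuous_const.add (continuous_id.smul continuous_const))
        have hev : ∀ᶠ ε in nhds (0:ℝ), 1 < ⟪a j, f ε⟫ := hcont.eventually_const_lt hj1
        exact (hev.filter_mono nhdsWithin_le_nhds).mono fun ε h => h.le
    have hnorm : ∀ᶠ ε in nhdsWithin 0 (Set.Ioi 0), ⟪f ε, f ε⟫ < ⟪u, u⟫ := by
      have hzu : ⟪u, z⟫ < 0 := by exact hz2
      have hcont : ContinuousAt (fun ε : ℝ => 2 * ⟪u, z⟫ + ε * ⟪z, z⟫) 0 := by fun_prop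
      have hval : (fun ε : ℝ => 2 * ⟪u, z⟫ + ε * ⟪z, z⟫) 0 < 0 := by simpa using by linarith
      have hev : ∀ᶠ ε in nhds (0:ℝ), 2 * ⟪u, z⟫ + ε * ⟪z, z⟫ < 0 :=
        hcont.eventually_lt_const hval
      filter_upwards [hev.filter_mono nhdsWithin_le_nhds, self_mem_nhdsWithin] with ε h1 h2
      have hexp : ⟪f ε, f ε⟫ = ⟪u, u⟫ + ε * (2 * ⟪u, z⟫ + ε * ⟪z, z⟫) := by
        simp only [hf]
        rw [real_inner_add_add_self, real_inner_smul_right, real_inner_smul_left,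
          real_inner_smul_right]
        ring
      rw [hexp]
      nlinarith [mul_neg_of_pos_of_neg (Set.mem_Ioi.mp h2) h1]
    obtain ⟨ε, hεf, hεn⟩ := ((Filter.eventually_all.mpr hfeas').and hnorm).exists
    exact absurd (hopt (f ε) hεf) (not_le.mpr hεn)


open scoped RealInnerProductSpace in
/-- The aligned pair built from the max-margin SVM solution satisfies the KKT
conditions of the GNN max-margin problem. -/
theorem kkt_of_aligned_pair {d m : ℕ} (r : ℝ) (hr : 0 < r)
    (v : Fin m → Fin d → ℝ) (y : Fin m → ℝ)
    (hy : ∀ j, y j = 1 ∨ y j = -1)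
    (ustar : Fin d → ℝ)
    (hufeas : ∀ j, y j * (ustar ⬝ᵥ v j) ≥ 1)
    (huopt : ∀ u : Fin d → ℝ, (∀ j, y j * (u ⬝ᵥ v j) ≥ 1) →
      ustar ⬝ᵥ ustar ≤ u ⬝ᵥ u)
    (hactive : ∃ j, y j * (ustar ⬝ᵥ v j) = 1)
    (w₁ w₂ : Fin d → ℝ)
    (hw₁ : w₁ = (1 + r ^ 2)⁻¹ • ustar)
    (hw₂ : w₂ = (r / (1 + r ^ 2)) • ustar) :
    ∃ lam : Fin m → ℝ, (∀ j, 0 ≤ lam j) ∧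
      w₁ = ∑ j, (lam j * y j) • v j ∧
      w₂ = r • ∑ j, (lam j * y j) • v j ∧
      ∀ j, 1 < y j * ((w₁ + r • w₂) ⬝ᵥ v j) → lam j = 0 := by
  classical
  have hr2 : (0:ℝ) < 1 + r ^ 2 := by positivity
  let a : Fin m → EuclideanSpace ℝ (Fin d) := fun j => WithLp.toLp 2 (y j • v j)
  let u : EuclideanSpace ℝ (Fin d) := WithLp.toLp 2 ustar
  have hinner : ∀ x w : EuclideanSpace ℝ (Fin d), ⟪x, w⟫ = (x : Fin d → ℝ) ⬝ᵥ (w : Fin d → ℝ) := by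
    intro x w
    simp [PiLp.inner_apply, RCLike.inner_apply, dotProduct, mul_comm]
  have hdot : ∀ j (w : Fin d → ℝ), ((y j • v j) : Fin d → ℝ) ⬝ᵥ w = y j * (w ⬝ᵥ v j) := by
    intro j w
    rw [smul_dotProduct, dotProduct_comm]
    rfl
  have hfeas : ∀ j, 1 ≤ ⟪a j, u⟫ := by
    intro j
    rw [hinner]
    show (1:ℝ) ≤ ((y j • v j) : Fin d → ℝ) ⬝ᵥ ustar
    rw [hdot]
    exact hufeas j
  have hopt' : ∀ w : EuclideanSpace ℝ (Fin d), (∀ j, 1 ≤ ⟪a j, w⟫) → ⟪u, u⟫ ≤ ⟪w, w⟫ := by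
    intro w hw
    rw [hinner, hinner]
    refine huopt w fun j => ?_
    have := hw j
    rw [hinner] at this
    show y j * ((w : Fin d → ℝ) ⬝ᵥ v j) ≥ 1
    rw [← hdot j]
    exact this
  obtain ⟨μ, hμ0, hrep, hslack⟩ := kkt_core a u hfeas hopt'
  have hrep' : ustar = ∑ j, μ j • (y j • v j) := by simpa [u, a] using congrArg WithLp.ofLp hrep
  have hsum : ∑ j, (μ j / (1 + r ^ 2) * y j) • v j = (1 + r ^ 2)⁻¹ • ustar := by
    rw [hrep', Finset.smul_sum]
    refine Finset.sum_congr rfl fun j _ => ?_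
    rw [smul_smul, smul_smul]
    congr 1
    field_simp
  have hws : w₁ + r • w₂ = ustar := by
    rw [hw₁, hw₂, smul_smul, ← add_smul]
    have : (1 + r ^ 2)⁻¹ + r * (r / (1 + r ^ 2)) = 1 := by
      field_simp
    rw [this, one_smul]
  refine ⟨fun j => μ j / (1 + r ^ 2), fun j => div_nonneg (hμ0 j) hr2.le, ?_, ?_, ?_⟩
  · rw [hw₁, hsum]
  · rw [hw₂, hsum, smul_smul, div_eq_mul_inv]
  · intro j hj
    rw [hws] at hj
    have h1 : 1 < ⟪a j, u⟫ := by
      rw [hinner]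
      show (1:ℝ) < ((y j • v j) : Fin d → ℝ) ⬝ᵥ ustar
      rw [hdot]
      exact hj
    show μ j / (1 + r ^ 2) = 0
    rw [hslack j h1, zero_div]
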